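/- Let P be a homogeneous polynomial in at least 3 variables x_0,...,x_n (n ≥ 2) over an algebraically closed field of characteristic 0. If the system x_i · ∂P/∂x_i = 0 for i = 0,...,n has only the trivial solution, then P(x_0^k,...,x_n^k) is irreducible for every positive integer k. -/

import Mathlib

open MvPolynomial

namespace Stmt6Aux


variable {K : Type*} [Field K] {σ : Type*}

lemma degree_add (u v : σ →₀ ℕ) : (u + v).degree = u.degree + v.degree := by
  classical
  simp [Finsupp.degree_eq_weight_one, map_add]

lemma exists_degree_eq_totalDegree (p : MvPolynomial σ K) (hp : p ≠ 0) :
    ∃ d ∈ p.support, d.degree = p.totalDegree := by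
  obtain ⟨d, hd, h⟩ := Finset.exists_mem_eq_sup p.support
    (support_nonempty.2 hp) (fun s => s.sum fun _ e => e)
  refine ⟨d, hd, ?_⟩
  rw [totalDegree, h]
  simp [Finsupp.degree, Finsupp.sum]
  rfl

lemma hc_ne_zero_of_degree (p : MvPolynomial σ K) {d : σ →₀ ℕ} (hd : d ∈ p.support)
    (hdd : d.degree = p.totalDegree) :
    homogeneousComponent p.totalDegree p ≠ 0 := by
  intro h
  have h2 : coeff d (homogeneousComponent p.totalDegree p) = coeff d p := by
    rw [coeff_homogeneousComponent, if_pos hdd]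
  rw [h] at h2
  exact mem_support_iff.1 hd h2.symm

lemma hc_top_ne_zero (p : MvPolynomial σ K) (hp : p ≠ 0) :
    homogeneousComponent p.totalDegree p ≠ 0 := by
  obtain ⟨d, hd, hdd⟩ := exists_degree_eq_totalDegree p hp
  exact hc_ne_zero_of_degree p hd hdd

lemma hc_mul_right {A : MvPolynomial σ K} {a : ℕ} (hA : A.IsHomogeneous a)
    (w : MvPolynomial σ K) (j : ℕ) :
    homogeneousComponent (j + a) (w * A) = homogeneousComponent j w * A := by
  classical
  ext d
  rw [coeff_homogeneousComponent]
  by_cases hd : d.degree = j + a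
  · rw [if_pos hd, coeff_mul, coeff_mul]
    refine Finset.sum_congr rfl ?_
    rintro ⟨u, v⟩ huv
    rw [Finset.HasAntidiagonal.mem_antidiagonal] at huv
    rw [coeff_homogeneousComponent]
    by_cases hv : v.degree = a
    · have hu : u.degree = j := by
        have := degree_add u v
        rw [huv, hd, hv] at this
        omega
      rw [if_pos hu]
    · rw [hA.coeff_eq_zero hv, mul_zero, mul_zero]
  · rw [if_neg hd, coeff_mul]
    refine (Finset.sum_eq_zero ?_).symm
    rintro ⟨u, v⟩ huv
    rw [Finset.HasAntidiagonal.mem_antidiagonal] at huv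
    rw [coeff_homogeneousComponent]
    by_cases hv : v.degree = a
    · by_cases hu : u.degree = j
      · exfalso; apply hd
        rw [← huv, degree_add, hu, hv]
      · rw [if_neg hu, zero_mul]
    · rw [hA.coeff_eq_zero hv, mul_zero]

lemma hc_top_mul [IsDomain K]
    (p q : MvPolynomial σ K) (hp : p ≠ 0) (hq : q ≠ 0) :
    homogeneousComponent (p.totalDegree + q.totalDegree) (p * q) =
      homogeneousComponent p.totalDegree p * homogeneousComponent q.totalDegree q ∧
      homogeneousComponent p.totalDegree p * homogeneousComponent q.totalDegree q ≠ 0 := by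
  classical
  set a := p.totalDegree with ha
  set b := q.totalDegree with hb
  constructor
  · ext d
    rw [coeff_homogeneousComponent]
    by_cases hd : d.degree = a + b
    · rw [if_pos hd, coeff_mul, coeff_mul]
      refine Finset.sum_congr rfl ?_
      rintro ⟨u, v⟩ huv
      rw [Finset.HasAntidiagonal.mem_antidiagonal] at huv
      rw [coeff_homogeneousComponent, coeff_homogeneousComponent]
      have hda : u.degree + v.degree = a + b := by rw [← degree_add, huv, hd]
      by_cases hu : u.degree = a
      · have hv : v.degree = b := by omega
        rw [if_pos hu, if_pos hv]
      · rcases lt_or_gt_of_ne hu with h | h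
        · have hv : b < v.degree := by omega
          have hz : coeff v q = 0 := coeff_eq_zero_of_totalDegree_lt hv
          rw [hz, mul_zero, if_neg hu, zero_mul]
        · have hz : coeff u p = 0 := coeff_eq_zero_of_totalDegree_lt h
          rw [hz, zero_mul, if_neg hu, zero_mul]
    · rw [if_neg hd, coeff_mul]
      refine (Finset.sum_eq_zero ?_).symm
      rintro ⟨u, v⟩ huv
      rw [Finset.HasAntidiagonal.mem_antidiagonal] at huv
      rw [coeff_homogeneousComponent, coeff_homogeneousComponent]
      by_cases hu : u.degree = a
      · by_cases hv : v.degree = b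
        · exfalso; apply hd; rw [← huv, degree_add, hu, hv]
        · rw [if_neg hv, mul_zero]
      · rw [if_neg hu, zero_mul]
  · exact mul_ne_zero (hc_top_ne_zero p hp) (hc_top_ne_zero q hq)



variable {K : Type*} [Field K]

/-- The set of exponents of degree t is finite, with card the multichoose number. -/
noncomputable instance degFintype (N t : ℕ) :
    Fintype {d : Fin N →₀ ℕ // d.degree = t} := by
  have e : {d : Fin N →₀ ℕ // d.degree = t} ≃ Sym (Fin N) t := by
    refine (Equiv.subtypeEquiv (Equiv.refl _) ?_).trans (Sym.equivNatSum (Fin N) t).symm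
    intro d
    simp [Finsupp.degree, Finsupp.sum]
    exact Iff.rfl
  exact Fintype.ofEquiv _ e.symm

lemma degCard (N t : ℕ) :
    Fintype.card {d : Fin N →₀ ℕ // d.degree = t} = (N + t - 1).choose t := by
  have e : {d : Fin N →₀ ℕ // d.degree = t} ≃ Sym (Fin N) t := by
    refine (Equiv.subtypeEquiv (Equiv.refl _) ?_).trans (Sym.equivNatSum (Fin N) t).symm
    intro d
    simp [Finsupp.degree, Finsupp.sum]
    exact Iff.rfl
  rw [Fintype.card_congr e, Sym.card_sym_eq_choose, Fintype.card_fin]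

noncomputable def hsEquiv (N t : ℕ) :
    (homogeneousSubmodule (Fin N) K t) ≃ₗ[K] ({d : Fin N →₀ ℕ // d.degree = t} →₀ K) := by
  rw [homogeneousSubmodule_eq_finsupp_supported]
  exact (AddMonoidAlgebra.supportedEquivFinsupp {d : Fin N →₀ ℕ | d.degree = t}).trans
    (Finsupp.domLCongr (Equiv.refl _))

instance hsFinite (N t : ℕ) : FiniteDimensional K (homogeneousSubmodule (Fin N) K t) :=
  Module.Finite.equiv (hsEquiv (K := K) N t).symm

lemma hsRank (N t : ℕ) :
    Module.finrank K (homogeneousSubmodule (Fin N) K t) = (N + t - 1).choose t := by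
  rw [(hsEquiv (K := K) N t).finrank_eq, Module.finrank_finsupp_self, degCard]



def D (e u : ℕ) : ℕ := (e + u).choose e

def G (e u : ℕ) : ℕ := (e + 1 + u).choose (e + 1)

lemma D_strictMono {e : ℕ} (he : 1 ≤ e) : StrictMono (D e) := by
  apply strictMono_nat_of_lt_succ
  intro u
  obtain ⟨f, rfl⟩ : ∃ f, e = f + 1 := ⟨e - 1, by omega⟩
  show (f + 1 + u).choose (f + 1) < (f + 1 + (u + 1)).choose (f + 1)
  rw [show f + 1 + (u + 1) = (f + 1 + u) + 1 by omega, Nat.choose_succ_succ]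
  simp only [Nat.succ_eq_add_one]
  have h3 : 0 < (f + 1 + u).choose f := Nat.choose_pos (by omega)
  omega

lemma G_succ (e u : ℕ) : G e (u + 1) = G e u + D e (u + 1) := by
  show (e + 1 + (u + 1)).choose (e + 1) = (e + 1 + u).choose (e + 1) + (e + (u + 1)).choose e
  rw [show e + 1 + (u + 1) = (e + 1 + u) + 1 by omega, Nat.choose_succ_succ]
  simp only [Nat.succ_eq_add_one]
  rw [show e + 1 + u = e + (u + 1) by omega]
  exact add_comm _ _

lemma G_tele (e s a : ℕ) : G e (s + a) = G e s + ∑ i ∈ Finset.range a, D e (s + i + 1) := by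
  induction a with
  | zero => simp
  | succ a ih =>
      rw [Finset.sum_range_succ, show s + (a + 1) = (s + a) + 1 by omega, G_succ, ih]
      omega

lemma G_convex {e a b : ℕ} (he : 1 ≤ e) (ha : 1 ≤ a) (hb : 1 ≤ b) (s : ℕ) :
    G e (s + a) + G e (s + b) < G e (s + a + b) + G e s := by
  have h1 : G e (s + a) = G e s + ∑ i ∈ Finset.range a, D e (s + i + 1) := G_tele e s a
  have h2 : G e (s + a + b) = G e (s + b) + ∑ i ∈ Finset.range a, D e (s + b + i + 1) := by
    rw [show s + a + b = (s + b) + a by omega, G_tele]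
  have h3 : ∑ i ∈ Finset.range a, D e (s + i + 1) < ∑ i ∈ Finset.range a, D e (s + b + i + 1) := by
    apply Finset.sum_lt_sum_of_nonempty
    · exact Finset.nonempty_range_iff.2 (by omega)
    · intro i _
      exact D_strictMono he (by omega)
  omega

lemma choose_ineq {N a b : ℕ} (hN : 3 ≤ N) (ha : 1 ≤ a) (hb : 1 ≤ b) (s : ℕ) :
    (N + (s + a) - 1).choose (s + a) + (N + (s + b) - 1).choose (s + b) <
      (N + (s + a + b) - 1).choose (s + a + b) + (N + s - 1).choose s := by
  have key : ∀ t : ℕ, (N + t - 1).choose t = G (N - 2) t := by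
    intro t
    show _ = (N - 2 + 1 + t).choose (N - 2 + 1)
    have h1 : N + t - 1 = N - 2 + 1 + t := by omega
    have h2 := Nat.choose_symm (show t ≤ N - 2 + 1 + t by omega)
    rw [show N - 2 + 1 + t - t = N - 2 + 1 by omega] at h2
    rw [h1, ← h2]
  rw [key, key, key, key]
  exact G_convex (by omega) ha hb s



variable {K : Type*} [CommRing K] {N : ℕ}

lemma chain (k : ℕ) (i : Fin N) (P : MvPolynomial (Fin N) K) :
    pderiv i (aeval (fun j => (X j : MvPolynomial (Fin N) K) ^ k) P)
      = (k : MvPolynomial (Fin N) K) * (X i) ^ (k - 1)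
        * aeval (fun j => (X j : MvPolynomial (Fin N) K) ^ k) (pderiv i P) := by
  induction P using MvPolynomial.induction_on with
  | C a =>
      rw [aeval_C, pderiv_C]
      simp
  | add p q hp hq =>
      simp only [map_add]
      rw [hp, hq]
      ring
  | mul_X p j hp =>
      have hR : pderiv i (p * X j) = pderiv i p * X j + p * pderiv i (X j) := pderiv_mul
      rw [map_mul, aeval_X, pderiv_mul, hp, pderiv_pow, hR, map_add, map_mul, map_mul, aeval_X]
      by_cases hij : i = j
      · subst hij
        rw [pderiv_X_self, map_one]
        ring
      · rw [pderiv_X_of_ne (Ne.symm hij), map_zero]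
        ring

lemma eval_aeval_pow {K : Type*} [CommSemiring K] (x : Fin N → K) (k : ℕ)
    (p : MvPolynomial (Fin N) K) :
    eval x (aeval (fun j => (X j : MvPolynomial (Fin N) K) ^ k) p)
      = eval (fun j => x j ^ k) p := by
  have h := MvPolynomial.comp_aeval (R := K)
    (fun j => (X j : MvPolynomial (Fin N) K) ^ k) (aeval x)
  have h2 := congrArg (fun φ => (φ : _ →ₐ[K] K) p) h
  simp only [AlgHom.comp_apply, map_pow, aeval_X] at h2
  exact h2

variable {K : Type*} [Field K] [IsAlgClosed K]


lemma intersection {N a b : ℕ} (hN : 3 ≤ N)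
    {A B : MvPolynomial (Fin N) K} (hA : A.IsHomogeneous a) (hB : B.IsHomogeneous b)
    (hA0 : A ≠ 0) (hB0 : B ≠ 0) (ha : 1 ≤ a) (hb : 1 ≤ b) :
    ∃ x : Fin N → K, x ≠ 0 ∧ eval x A = 0 ∧ eval x B = 0 := by
  classical
  by_contra hcon
  push_neg at hcon
  set I : Ideal (MvPolynomial (Fin N) K) := Ideal.span {A, B} with hI
  have hAI : A ∈ I := Ideal.subset_span (by simp)
  have hBI : B ∈ I := Ideal.subset_span (by simp)
  -- every X i is in the radical
  have hrad : ∀ i : Fin N, X i ∈ I.radical := by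
    intro i
    rw [← vanishingIdeal_zeroLocus_eq_radical (K := K)]
    rw [mem_vanishingIdeal_iff]
    intro x hx
    have hx0 : x = 0 := by
      by_contra hxne
      exact (hcon x hxne (hx A hAI)) (hx B hBI)
    rw [hx0]
    simp
  -- a uniform power m with X i ^ m ∈ I
  have hmi : ∀ i : Fin N, ∃ m : ℕ, X i ^ m ∈ I := fun i => hrad i
  choose m0 hm0 using hmi
  set m : ℕ := (Finset.univ.sup m0) + 1 with hm
  have hm1 : 1 ≤ m := by omega
  have hmem : ∀ i : Fin N, (X i : MvPolynomial (Fin N) K) ^ m ∈ I := by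
    intro i
    have h1 : m0 i ≤ m := le_trans (Finset.le_sup (Finset.mem_univ i)) (by omega)
    have : (X i : MvPolynomial (Fin N) K) ^ m
        = X i ^ (m - m0 i) * X i ^ (m0 i) := by
      rw [← pow_add]
      congr 1
      omega
    rw [this]
    exact Ideal.mul_mem_left _ _ (hm0 i)
  -- set up the linear algebra
  set s : ℕ := N * m with hs
  set t : ℕ := s + a + b with ht
  set V : ℕ → Submodule K (MvPolynomial (Fin N) K) :=
    fun j => homogeneousSubmodule (Fin N) K j with hV
  set MA := LinearMap.mulLeft K A with hMA
  set MB := LinearMap.mulLeft K B with hMB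
  set S1 := (V (s + b)).map MA with hS1
  set S2 := (V (s + a)).map MB with hS2
  haveI : ∀ j, FiniteDimensional K (V j) := fun j => hsFinite N j
  haveI : FiniteDimensional K S1 := Module.Finite.map _ _
  haveI : FiniteDimensional K S2 := Module.Finite.map _ _
  have hMAinj : Function.Injective MA := by
    intro x y hxy
    simp only [hMA, LinearMap.mulLeft_apply] at hxy
    exact mul_left_cancel₀ hA0 hxy
  have hMBinj : Function.Injective MB := by
    intro x y hxy
    simp only [hMB, LinearMap.mulLeft_apply] at hxy
    exact mul_left_cancel₀ hB0 hxy
  -- claim 1 : V t ≤ S1 ⊔ S2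
  have claim1 : V t ≤ S1 ⊔ S2 := by
    intro p hp
    rw [← support_sum_monomial_coeff p]
    apply Submodule.sum_mem
    intro d hd
    -- degree of d is t
    have hdeg : d.degree = t := by
      by_contra hne
      exact mem_support_iff.1 hd (((mem_homogeneousSubmodule _ _).1 hp).coeff_eq_zero hne)
    -- pigeonhole : some exponent is at least m
    have hpig : ∃ i : Fin N, m ≤ d i := by
      by_contra hno
      push_neg at hno
      have h1 : d.degree ≤ ∑ i : Fin N, d i := by
        rw [Finsupp.degree]
        exact Finset.sum_le_sum_of_subset (Finset.subset_univ _)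
      have h2 : ∑ i : Fin N, d i ≤ ∑ _i : Fin N, (m - 1) :=
        Finset.sum_le_sum (fun i _ => by have := hno i; omega)
      simp only [Finset.sum_const, Finset.card_univ, Fintype.card_fin, smul_eq_mul] at h2
      have : N * (m - 1) < N * m := (Nat.mul_lt_mul_left (by omega)).2 (by omega)
      omega
    obtain ⟨i, him⟩ := hpig
    obtain ⟨u, v, huv⟩ := Ideal.mem_span_pair.1 (hmem i)
    set c := coeff d p with hc
    set d' : Fin N →₀ ℕ := d - Finsupp.single i m with hd'
    have hdd : d' + Finsupp.single i m = d :=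
      tsub_add_cancel_of_le (Finsupp.single_le_iff.2 him)
    set w : MvPolynomial (Fin N) K := monomial d' c with hw
    have hsplit : (monomial d c : MvPolynomial (Fin N) K) = (w * u) * A + (w * v) * B := by
      have h1 : (monomial d c : MvPolynomial (Fin N) K)
          = w * monomial (Finsupp.single i m) 1 := by
        rw [hw, monomial_mul, hdd, mul_one]
      rw [h1, ← X_pow_eq_monomial, ← huv]
      ring
    have hcomp := congrArg (homogeneousComponent t) hsplit
    have hmono_mem : (monomial d c : MvPolynomial (Fin N) K) ∈ homogeneousSubmodule (Fin N) K t :=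
      (mem_homogeneousSubmodule _ _).2 (isHomogeneous_monomial c hdeg)
    rw [homogeneousComponent_of_mem hmono_mem, if_pos rfl, map_add] at hcomp
    have hca : homogeneousComponent t ((w * u) * A) = homogeneousComponent (s + b) (w * u) * A := by
      rw [ht, show s + a + b = (s + b) + a by ring]
      exact hc_mul_right hA (w * u) (s + b)
    have hcb : homogeneousComponent t ((w * v) * B) = homogeneousComponent (s + a) (w * v) * B := by
      rw [ht, show s + a + b = (s + a) + b by ring]
      exact hc_mul_right hB (w * v) (s + a)
    rw [hca, hcb] at hcomp
    rw [hcomp]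
    apply Submodule.add_mem
    · apply Submodule.mem_sup_left
      rw [hS1]
      refine Submodule.mem_map.2 ⟨homogeneousComponent (s + b) (w * u), ?_, ?_⟩
      · exact homogeneousComponent_mem _ _
      · rw [hMA, LinearMap.mulLeft_apply, mul_comm]
    · apply Submodule.mem_sup_right
      rw [hS2]
      refine Submodule.mem_map.2 ⟨homogeneousComponent (s + a) (w * v), ?_, ?_⟩
      · exact homogeneousComponent_mem _ _
      · rw [hMB, LinearMap.mulLeft_apply, mul_comm]
  -- claim 2 : (V s).map (mulLeft (A*B)) ≤ S1 ⊓ S2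
  have claim2 : (V s).map (LinearMap.mulLeft K (A * B)) ≤ S1 ⊓ S2 := by
    rintro _ ⟨z, hz, rfl⟩
    rw [LinearMap.mulLeft_apply]
    constructor
    · refine Submodule.mem_map.2 ⟨B * z, ?_, ?_⟩
      · rw [hV, mem_homogeneousSubmodule, show s + b = b + s by ring]
        exact hB.mul ((mem_homogeneousSubmodule _ _).1 hz)
      · rw [hMA, LinearMap.mulLeft_apply]; ring
    · refine Submodule.mem_map.2 ⟨A * z, ?_, ?_⟩
      · rw [hV, mem_homogeneousSubmodule, show s + a = a + s by ring]
        exact hA.mul ((mem_homogeneousSubmodule _ _).1 hz)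
      · rw [hMB, LinearMap.mulLeft_apply]; ring
  -- finrank bookkeeping
  have hMABinj : Function.Injective (LinearMap.mulLeft K (A * B)) := by
    intro x y hxy
    simp only [LinearMap.mulLeft_apply] at hxy
    exact mul_left_cancel₀ (mul_ne_zero hA0 hB0) hxy
  have e1 : Module.finrank K S1 = Module.finrank K (V (s + b)) :=
    ((Submodule.equivMapOfInjective MA hMAinj (V (s + b))).finrank_eq).symm
  have e2 : Module.finrank K S2 = Module.finrank K (V (s + a)) :=
    ((Submodule.equivMapOfInjective MB hMBinj (V (s + a))).finrank_eq).symm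
  have e3 : Module.finrank K ((V s).map (LinearMap.mulLeft K (A * B)))
      = Module.finrank K (V s) :=
    ((Submodule.equivMapOfInjective _ hMABinj (V s)).finrank_eq).symm
  haveI : FiniteDimensional K ((V s).map (LinearMap.mulLeft K (A * B))) :=
    Module.Finite.map _ _
  have i1 : Module.finrank K (V t) ≤ Module.finrank K (S1 ⊔ S2 : Submodule K _) :=
    Submodule.finrank_mono claim1
  have i2 : Module.finrank K (V s) ≤ Module.finrank K (S1 ⊓ S2 : Submodule K _) := by
    rw [← e3]
    exact Submodule.finrank_mono claim2
  have i3 := Submodule.finrank_sup_add_finrank_inf_eq S1 S2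
  rw [e1, e2] at i3
  have hrk : ∀ j : ℕ, Module.finrank K (V j) = (N + j - 1).choose j := fun j => hsRank N j
  have hineq := choose_ineq hN ha hb s
  rw [← hrk, ← hrk, ← hrk, ← hrk] at hineq
  rw [ht] at i1
  -- combine
  omega

lemma eq_C_of_totalDegree_eq_zero {K : Type*} [Field K] {σ : Type*} {p : MvPolynomial σ K}
    (h : p.totalDegree = 0) : p = C (coeff 0 p) := by
  classical
  ext d
  by_cases hd : d = 0
  · subst hd; simp
  · rw [coeff_C, if_neg (Ne.symm hd)]
    by_contra hne
    have hd' : d ∈ p.support := mem_support_iff.2 hne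
    have h2 := (totalDegree_eq_zero_iff _ p).1 h d hd'
    exact hd (Finsupp.ext fun x => h2 x)

end Stmt6Aux

/-- Let `P` be a homogeneous polynomial in `n+1 ≥ 3` variables over an
algebraically closed field of characteristic zero.  If the system `xᵢ · ∂P/∂xᵢ = 0`,
`i = 0,…,n`, has only the trivial solution, then `P(x₀^k,…,xₙ^k)` is irreducible for every
positive integer `k`. -/
theorem stmt6 {K : Type*} [Field K] [IsAlgClosed K] [CharZero K] {n d : ℕ} (hn : 2 ≤ n)
    (P : MvPolynomial (Fin (n + 1)) K) (hhom : P.IsHomogeneous d)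
    (heuler : ∀ x : Fin (n + 1) → K, (∀ i, x i * eval x (pderiv i P) = 0) → x = 0) :
    ∀ k : ℕ, 0 < k →
      Irreducible (aeval (fun j => (X j : MvPolynomial (Fin (n + 1)) K) ^ k) P) := by
  intro k hk
  classical
  set f : Fin (n + 1) → MvPolynomial (Fin (n + 1)) K := fun j => X j ^ k with hf
  set Q : MvPolynomial (Fin (n + 1)) K := aeval f P with hQdef
  -- P is not a constant
  have hnontriv : ∀ c : K, P ≠ C c := by
    intro c hPc
    have h1 : (fun _ : Fin (n + 1) => (1 : K)) = 0 := by
      apply heuler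
      intro i
      rw [hPc, pderiv_C]
      simp
    have h2 := congrFun h1 0
    simp at h2
  have hP0 : P ≠ 0 := by
    have := hnontriv 0
    rwa [map_zero] at this
  have hd1 : 1 ≤ d := by
    by_contra h
    have hd0 : d = 0 := by omega
    subst hd0
    have h2 : P.totalDegree = 0 := hhom.totalDegree hP0
    exact hnontriv _ (Stmt6Aux.eq_C_of_totalDegree_eq_zero h2)
  have hQhom : Q.IsHomogeneous (k * d) :=
    hhom.aeval f (fun i => isHomogeneous_X_pow i k)
  have hQ0 : Q ≠ 0 := by
    intro h
    apply hP0
    apply MvPolynomial.funext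
    intro y
    choose x hx using fun j => IsAlgClosed.exists_pow_nat_eq (y j) hk
    have h1 : eval x Q = eval (fun j => x j ^ k) P := Stmt6Aux.eval_aeval_pow x k P
    rw [h] at h1
    have h2 : (fun j => x j ^ k) = y := funext hx
    rw [h2] at h1
    simp only [map_zero] at h1
    rw [← h1]
    simp
  -- smoothness transfer
  have hgrad : ∀ x : Fin (n + 1) → K, (∀ i, eval x (pderiv i Q) = 0) → x = 0 := by
    intro x hx
    have hkK : (k : K) ≠ 0 := Nat.cast_ne_zero.2 hk.ne'
    have hy : ∀ i, (x i ^ k) * eval (fun j => x j ^ k) (pderiv i P) = 0 := by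
      intro i
      have h1 := congrArg (eval x) (Stmt6Aux.chain (K := K) k i P)
      rw [hx i] at h1
      simp only [map_mul, map_pow, eval_X, map_natCast, Stmt6Aux.eval_aeval_pow] at h1
      set E := eval (fun j => x j ^ k) (pderiv i P) with hE
      have h2 : x i ^ (k - 1) * E = 0 := by
        rcases mul_eq_zero.1 h1.symm with h | h
        · rcases mul_eq_zero.1 h with h' | h'
          · exact absurd h' hkK
          · rw [h', zero_mul]
        · rw [h, mul_zero]
      have h3 : x i ^ k = x i * x i ^ (k - 1) := by
        rw [← pow_succ']
        congr 1
        omega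
      rw [h3, mul_assoc, h2, mul_zero]
    have h0 := heuler (fun j => x j ^ k) hy
    funext i
    have h4 := congrFun h0 i
    simp only [Pi.zero_apply] at h4 ⊢
    exact pow_eq_zero_iff hk.ne' |>.1 h4
  constructor
  · -- Q is not a unit
    intro hu
    obtain ⟨R, hQR⟩ := isUnit_iff_exists_inv.1 hu
    have hR0 : R ≠ 0 := by
      intro h
      rw [h, mul_zero] at hQR
      exact zero_ne_one hQR
    obtain ⟨hmul, hne⟩ := Stmt6Aux.hc_top_mul Q R hQ0 hR0
    rw [hQR] at hmul
    have h1 : Q.totalDegree = k * d := hQhom.totalDegree hQ0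
    have h2 : Q.totalDegree + R.totalDegree ≠ 0 := by
      have : 1 ≤ k * d := Nat.one_le_iff_ne_zero.2 (Nat.mul_ne_zero hk.ne' (by omega))
      omega
    have h3 : homogeneousComponent (Q.totalDegree + R.totalDegree) (1 : MvPolynomial (Fin (n + 1)) K) = 0 := by
      rw [homogeneousComponent_of_mem ((mem_homogeneousSubmodule _ _).2 (isHomogeneous_one _ _)),
        if_neg h2]
    rw [h3] at hmul
    exact hne hmul.symm
  · -- factors
    rintro A B hAB
    by_contra hcon
    push_neg at hcon
    obtain ⟨hA, hB⟩ := hcon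
    have hA0 : A ≠ 0 := by
      intro h
      rw [h, zero_mul] at hAB
      exact hQ0 hAB
    have hB0 : B ≠ 0 := by
      intro h
      rw [h, mul_zero] at hAB
      exact hQ0 hAB
    obtain ⟨hmul, hne⟩ := Stmt6Aux.hc_top_mul A B hA0 hB0
    rw [← hAB] at hmul
    set A' := homogeneousComponent A.totalDegree A with hA'
    set B' := homogeneousComponent B.totalDegree B with hB'
    have hcQ : homogeneousComponent (A.totalDegree + B.totalDegree) Q
        = if A.totalDegree + B.totalDegree = k * d then Q else 0 :=
      homogeneousComponent_of_mem ((mem_homogeneousSubmodule _ _).2 hQhom)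
    have hQ'' : Q = A' * B' := by
      by_cases hT : A.totalDegree + B.totalDegree = k * d
      · rw [hcQ, if_pos hT] at hmul
        exact hmul
      · rw [hcQ, if_neg hT] at hmul
        exact absurd hmul.symm hne
    have hA'0 : A' ≠ 0 := by
      intro h
      apply hne
      rw [h, zero_mul]
    have hB'0 : B' ≠ 0 := by
      intro h
      apply hne
      rw [h, mul_zero]
    have htA : 1 ≤ A.totalDegree := by
      by_contra h
      have h2 : A.totalDegree = 0 := by omega
      have h3 := Stmt6Aux.eq_C_of_totalDegree_eq_zero h2
      have hc0 : coeff 0 A ≠ 0 := by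
        intro hc
        rw [hc, map_zero] at h3
        exact hA0 h3
      exact hA (h3 ▸ (isUnit_iff_ne_zero.2 hc0).map (C : K →+* MvPolynomial (Fin (n + 1)) K))
    have htB : 1 ≤ B.totalDegree := by
      by_contra h
      have h2 : B.totalDegree = 0 := by omega
      have h3 := Stmt6Aux.eq_C_of_totalDegree_eq_zero h2
      have hc0 : coeff 0 B ≠ 0 := by
        intro hc
        rw [hc, map_zero] at h3
        exact hB0 h3
      exact hB (h3 ▸ (isUnit_iff_ne_zero.2 hc0).map (C : K →+* MvPolynomial (Fin (n + 1)) K))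
    obtain ⟨x, hx0, hxA, hxB⟩ := Stmt6Aux.intersection (show 3 ≤ n + 1 by omega)
      (homogeneousComponent_isHomogeneous (n := A.totalDegree) (φ := A))
      (homogeneousComponent_isHomogeneous (n := B.totalDegree) (φ := B))
      hA'0 hB'0 htA htB
    have hQx : ∀ i, eval x (pderiv i Q) = 0 := by
      intro i
      have h1 : pderiv i Q = pderiv i A' * B' + A' * pderiv i B' := by
        rw [hQ'']
        exact pderiv_mul
      rw [h1]
      simp [hA', hB', hxA, hxB]
    exact hx0 (hgrad x hQx)
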